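/- Let L be an algebraically closed field of characteristic p > 0, and let A be the subgroup of GL₃(L) consisting of all matrices [[t,0,0],[0,t^p,s],[0,0,1]] with t ∈ Lˣ, s ∈ L. Let E₁₁ and E₂₃ be the matrix units in M₃(L) (with 1 in position (1,1), resp. (2,3), and 0 elsewhere), and let 𝔞 = L·E₁₁ ⊕ L·E₂₃ ⊆ M₃(L). Then 𝔞 is stable under conjugation by every element of A, and the set of elements of 𝔞 fixed under conjugation by every element of A is exactly L·E₁₁ (the scalar multiples of E₁₁). -/

import Mathlib

open Matrix

private lemma stmt3_aux_mat {L : Type*} [Field L] (a b : L) :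
    a • (Matrix.single (0 : Fin 3) (0 : Fin 3) (1 : L)) +
      b • (Matrix.single (1 : Fin 3) (2 : Fin 3) (1 : L)) =
      !![a, 0, 0; 0, 0, b; 0, 0, 0] := by
  ext i j
  fin_cases i <;> fin_cases j <;>
    simp [Matrix.single, Matrix.add_apply, Matrix.smul_apply, Matrix.vecHead, Matrix.vecTail]

private lemma stmt3_aux_inv {L : Type*} [Field L] (p : ℕ) (t s : L) (ht : t ≠ 0) :
    (!![t, 0, 0; 0, t ^ p, s; 0, 0, 1] : Matrix (Fin 3) (Fin 3) L)⁻¹ =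
      !![t⁻¹, 0, 0; 0, (t ^ p)⁻¹, -(s * (t ^ p)⁻¹); 0, 0, 1] := by
  have htp : t ^ p ≠ 0 := pow_ne_zero _ ht
  apply Matrix.inv_eq_right_inv
  ext i j
  fin_cases i <;> fin_cases j <;>
    simp [Matrix.mul_apply, Fin.sum_univ_three, Matrix.vecHead, Matrix.vecTail] <;> field_simp <;> ring

private lemma stmt3_aux_conj {L : Type*} [Field L] (p : ℕ) (t s a b : L) (ht : t ≠ 0) :
    !![t, 0, 0; 0, t ^ p, s; 0, 0, 1] * !![a, 0, 0; 0, 0, b; 0, 0, 0] *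
      (!![t, 0, 0; 0, t ^ p, s; 0, 0, 1] : Matrix (Fin 3) (Fin 3) L)⁻¹ =
      !![a, 0, 0; 0, 0, t ^ p * b; 0, 0, 0] := by
  have htp : t ^ p ≠ 0 := pow_ne_zero _ ht
  rw [stmt3_aux_inv p t s ht]
  ext i j
  fin_cases i <;> fin_cases j <;>
    simp [Matrix.mul_apply, Fin.sum_univ_three, Matrix.vecHead, Matrix.vecTail, mul_comm, ht, htp] <;> field_simp

/-- **Adjoint fixed points in the example group.**
Let `L` be an algebraically closed field of characteristic `p > 0`, let `A ⊆ GL₃(L)` be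
the group of matrices `[[t,0,0],[0,t^p,s],[0,0,1]]` (`t ∈ Lˣ`, `s ∈ L`), and let
`𝔞 = L·E₁₁ ⊕ L·E₂₃ ⊆ M₃(L)` where `E₁₁`, `E₂₃` are matrix units.  Then `𝔞` is stable
under conjugation by every element of `A`, and the set of elements of `𝔞` fixed under
conjugation by every element of `A` is exactly `L·E₁₁`. -/
theorem stmt_3 {L : Type*} [Field L] [IsAlgClosed L] (p : ℕ) (hp : p ≠ 0) [CharP L p]
    (A : Set (Matrix (Fin 3) (Fin 3) L))
    (hA : A = {M | ∃ t s : L, t ≠ 0 ∧ M = !![t, 0, 0; 0, t ^ p, s; 0, 0, 1]})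
    (E₁₁ E₂₃ : Matrix (Fin 3) (Fin 3) L)
    (hE₁₁ : E₁₁ = Matrix.single 0 0 1)
    (hE₂₃ : E₂₃ = Matrix.single 1 2 1)
    (𝔞 : Set (Matrix (Fin 3) (Fin 3) L))
    (h𝔞 : 𝔞 = {M | ∃ a b : L, M = a • E₁₁ + b • E₂₃}) :
    (∀ g ∈ A, ∀ M ∈ 𝔞, g * M * g⁻¹ ∈ 𝔞) ∧
      ({M ∈ 𝔞 | ∀ g ∈ A, g * M * g⁻¹ = M} = {M | ∃ c : L, M = c • E₁₁}) := by
  subst hA hE₁₁ hE₂₃ h𝔞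
  have hprime : p.Prime := by
    rcases CharP.char_is_prime_or_zero L p with h | h
    · exact h
    · exact absurd h hp
  haveI : Fact p.Prime := ⟨hprime⟩
  constructor
  · rintro g ⟨t, s, ht, rfl⟩ M ⟨a, b, rfl⟩
    rw [stmt3_aux_mat, stmt3_aux_conj p t s a b ht]
    exact ⟨a, t ^ p * b, (stmt3_aux_mat a (t ^ p * b)).symm⟩
  · ext M
    constructor
    · rintro ⟨⟨a, b, rfl⟩, hfix⟩
      haveI := Classical.decEq L
      obtain ⟨t, ht⟩ := Infinite.exists_notMem_finset ({0, 1} : Finset L)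
      simp only [Finset.mem_insert, Finset.mem_singleton, not_or] at ht
      obtain ⟨ht0, ht1⟩ := ht
      have h := hfix !![t, 0, 0; 0, t ^ p, (0 : L); 0, 0, 1] ⟨t, 0, ht0, rfl⟩
      rw [stmt3_aux_mat, stmt3_aux_conj p t 0 a b ht0] at h
      have hb : t ^ p * b = b := by
        have := congrFun (congrFun h 1) 2
        simpa using this
      have htp1 : t ^ p ≠ 1 := by
        intro hcon
        apply ht1
        have : t ^ p = 1 ^ p := by rw [hcon, one_pow]
        exact frobenius_inj L p this
      have hb0 : b = 0 := by
        have : (t ^ p - 1) * b = 0 := by ring_nf; linear_combination hb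
        rcases mul_eq_zero.mp this with h' | h'
        · exact absurd (sub_eq_zero.mp h') htp1
        · exact h'
      exact ⟨a, by rw [hb0]; simp⟩
    · rintro ⟨c, rfl⟩
      refine ⟨⟨c, 0, by simp⟩, ?_⟩
      rintro g ⟨t, s, ht, rfl⟩
      have hc : c • (Matrix.single (0 : Fin 3) (0 : Fin 3) (1 : L)) =
          !![c, 0, 0; 0, 0, 0; 0, 0, 0] := by
        have := stmt3_aux_mat c (0 : L); simpa using this
      rw [hc]
      have := stmt3_aux_conj p t s c 0 ht
      simpa using this
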